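/- arXiv:1209.4444 — 2 statements merged into one kernel-verified Lean document; each statement's English description precedes it below -/
import Mathlib

section
/- Let f : ℝ → ℝ be differentiable and concave on [x_i, x_{i+1}] with 0 ≤ x_i ≤ x_{i+1}. Let p_i, p_{i+1} ≥ 0 with p_i + p_{i+1} > 0, x̄ = (p_i x_i + p_{i+1} x_{i+1})/(p_i+p_{i+1}), and Δx = x_{i+1}−x_i. Then p_i (f(x̄) − f(x_i)) − p_{i+1} (f(x_{i+1}) − f(x̄)) ≤ (p_i p_{i+1}/(p_i+p_{i+1})) · Δx · (f'(x_i) − f'(x_{i+1})). -/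
theorem merge_error_deriv_bound (f f' : ℝ → ℝ)
    (x₁ x₂ : ℝ) (h0 : 0 ≤ x₁) (hle : x₁ ≤ x₂)
    (hconc : ConcaveOn ℝ (Set.Icc x₁ x₂) f)
    (hderiv : ∀ x ∈ Set.Icc x₁ x₂, HasDerivAt f (f' x) x)
    (p q : ℝ) (hp : 0 ≤ p) (hq : 0 ≤ q) (hpq : 0 < p + q) :
    p * (f ((p * x₁ + q * x₂) / (p + q)) - f x₁) -
      q * (f x₂ - f ((p * x₁ + q * x₂) / (p + q))) ≤
    (p * q / (p + q)) * (x₂ - x₁) * (f' x₁ - f' x₂) := by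
  set s := p + q with hs
  set xb := (p * x₁ + q * x₂) / s with hxb
  have hx1 : x₁ ∈ Set.Icc x₁ x₂ := ⟨le_refl _, hle⟩
  have hx2 : x₂ ∈ Set.Icc x₁ x₂ := ⟨hle, le_refl _⟩
  rcases eq_or_lt_of_le hle with heq | hlt
  · subst heq
    have : xb = x₁ := by rw [hxb, div_eq_iff (ne_of_gt hpq), hs]; ring
    rw [this]; simp
  rcases eq_or_lt_of_le hp with hp0 | hp0
  · have : xb = x₂ := by rw [hxb, ← hp0]; field_simp; rw [hs, ← hp0]; ring
    rw [this, ← hp0]; simp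
  rcases eq_or_lt_of_le hq with hq0 | hq0
  · have : xb = x₁ := by rw [hxb, ← hq0]; field_simp; rw [hs, ← hq0]; ring
    rw [this, ← hq0]; simp
  have hxb1 : x₁ < xb := by
    rw [hxb, lt_div_iff₀ hpq]; nlinarith
  have hxb2 : xb < x₂ := by
    rw [hxb, div_lt_iff₀ hpq]; nlinarith
  have hxbm : xb ∈ Set.Icc x₁ x₂ := ⟨le_of_lt hxb1, le_of_lt hxb2⟩
  have h1 : slope f x₁ xb ≤ f' x₁ :=
    hconc.slope_le_of_hasDerivAt hx1 hxbm hxb1 (hderiv x₁ hx1)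
  have h2 : f' x₂ ≤ slope f xb x₂ :=
    hconc.le_slope_of_hasDerivAt hxbm hx2 hxb2 (hderiv x₂ hx2)
  rw [slope_def_field, div_le_iff₀ (by linarith)] at h1
  rw [slope_def_field, le_div_iff₀ (by linarith)] at h2
  have e1 : xb - x₁ = q * (x₂ - x₁) / s := by rw [hxb]; field_simp; ring
  have e2 : x₂ - xb = p * (x₂ - x₁) / s := by rw [hxb]; field_simp; ring
  have key : p * (f xb - f x₁) - q * (f x₂ - f xb) ≤
      p * ((xb - x₁) * f' x₁) - q * ((x₂ - xb) * f' x₂) := by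
    have := mul_le_mul_of_nonneg_left h1 hp
    have := mul_le_mul_of_nonneg_left h2 hq
    linarith
  refine key.trans (le_of_eq ?_)
  rw [e1, e2]
  field_simp
end

section
/- For all x ∈ [0, 1/2], the binary entropy satisfies h(x) ≤ 2√(x(1−x)), i.e., the binary entropy function is dominated by the Bhattacharyya function on [0, 1/2]. -/
noncomputable def binEntropy (x : ℝ) : ℝ :=
  -x * Real.logb 2 x - (1 - x) * Real.logb 2 (1 - x)

namespace BhatAux

open Real Set

/-- `F x = 2 log 2 · √(x(1-x)) - h_e(x)` where `h_e` is natural-log binary entropy. -/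
noncomputable def F (x : ℝ) : ℝ := 2 * Real.log 2 * Real.sqrt (x * (1 - x)) - Real.binEntropy x

noncomputable def F' (x : ℝ) : ℝ :=
  Real.log 2 * (1 - 2 * x) / Real.sqrt (x * (1 - x)) + Real.log x - Real.log (1 - x)

noncomputable def xstar : ℝ := (1 - Real.sqrt (1 - (Real.log 2) ^ 2)) / 2

lemma L_lb : (0.6931 : ℝ) < Real.log 2 := by
  have := Real.log_two_gt_d9; norm_num at this ⊢; linarith

lemma L_ub : Real.log 2 < 0.6932 := by
  have := Real.log_two_lt_d9; norm_num at this ⊢; linarith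

lemma u_pos {x : ℝ} (h0 : 0 < x) (h1 : x < 1) : 0 < x * (1 - x) := by nlinarith

lemma sqrt_u_pos {x : ℝ} (h0 : 0 < x) (h1 : x < 1) : 0 < Real.sqrt (x * (1 - x)) :=
  Real.sqrt_pos.2 (u_pos h0 h1)

lemma hasDerivAt_sqrt_u {x : ℝ} (h0 : 0 < x) (h1 : x < 1) :
    HasDerivAt (fun y : ℝ => Real.sqrt (y * (1 - y)))
      ((1 - 2 * x) / (2 * Real.sqrt (x * (1 - x)))) x := by
  have h0' : HasDerivAt (fun y : ℝ => y * (1 - y)) (1 * (1 - x) + x * (0 - 1)) x :=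
    (hasDerivAt_id x).mul ((hasDerivAt_const x (1:ℝ)).sub (hasDerivAt_id x))
  have hinner : HasDerivAt (fun y : ℝ => y * (1 - y)) (1 - 2 * x) x := by
    convert h0' using 1
    ring
  have hsq := (Real.hasDerivAt_sqrt (u_pos h0 h1).ne').comp x hinner
  refine hsq.congr_deriv ?_
  field_simp [(sqrt_u_pos h0 h1).ne']

lemma hasDerivAt_F {x : ℝ} (h0 : 0 < x) (h1 : x < 1) : HasDerivAt F (F' x) x := by
  have h1' := (hasDerivAt_sqrt_u h0 h1).const_mul (2 * Real.log 2)
  have h2 := Real.hasDerivAt_binEntropy h0.ne' (by linarith : x ≠ 1)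
  have h := h1'.sub h2
  refine h.congr_deriv ?_
  unfold F'
  have hs := (sqrt_u_pos h0 h1).ne'
  field_simp
  ring

lemma hasDerivAt_F' {x : ℝ} (h0 : 0 < x) (h1 : x < 1) :
    HasDerivAt F'
      ((2 * Real.sqrt (x * (1 - x)) - Real.log 2) / (2 * Real.sqrt (x * (1 - x)) ^ 3)) x := by
  have hs := sqrt_u_pos h0 h1
  have hu := u_pos h0 h1
  have hx1 : (1 : ℝ) - x ≠ 0 := by linarith
  have hnum : HasDerivAt (fun y : ℝ => Real.log 2 * (1 - 2 * y)) (Real.log 2 * (-2)) x := by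
    have h := ((hasDerivAt_const x (1:ℝ)).sub ((hasDerivAt_id x).const_mul 2)).const_mul
      (Real.log 2)
    refine h.congr_deriv ?_
    first
    | ring
    | (simp only [id_eq]; ring)
  have hdiv := hnum.div (hasDerivAt_sqrt_u h0 h1) hs.ne'
  have hlog1 := Real.hasDerivAt_log h0.ne'
  have hlog2 : HasDerivAt (fun y : ℝ => Real.log (1 - y)) (-(1 - x)⁻¹) x := by
    have h := (Real.hasDerivAt_log hx1).comp x
      ((hasDerivAt_const x (1:ℝ)).sub (hasDerivAt_id x))
    refine h.congr_deriv ?_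
    first
    | ring
    | (simp only [id_eq]; ring)
  have h := (hdiv.add hlog1).sub hlog2
  refine h.congr_deriv ?_
  have hs2 : Real.sqrt (x * (1 - x)) ^ 2 = x * (1 - x) := Real.sq_sqrt hu.le
  set s := Real.sqrt (x * (1 - x)) with hsdef
  have h12 : (1 - 2*x) * (1 - 2*x) = 1 - 4 * s^2 := by rw [hs2]; ring
  have hT : (Real.log 2 * (-2) * s - Real.log 2 * (1 - 2 * x) * ((1 - 2 * x) / (2 * s))) / s ^ 2
      = - Real.log 2 / (2 * s ^ 3) := by
    have step : (Real.log 2 * (-2) * s - Real.log 2 * (1 - 2 * x) * ((1 - 2 * x) / (2 * s))) / s ^ 2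
        = (-4 * Real.log 2 * s^2 - Real.log 2 * ((1 - 2*x) * (1 - 2*x))) / (2 * s^3) := by
      field_simp
      ring
    rw [step, h12]
    have h2 : (-4 * Real.log 2 * s^2 - Real.log 2 * (1 - 4 * s^2)) = -Real.log 2 := by ring
    rw [h2]
  have hxinv : x⁻¹ - -(1 - x)⁻¹ = 1 / s ^ 2 := by
    rw [hs2]; field_simp; ring
  rw [show (Real.log 2 * (-2) * s - Real.log 2 * (1 - 2 * x) * ((1 - 2 * x) / (2 * s))) / s ^ 2 +
      x⁻¹ - -(1-x)⁻¹ = (Real.log 2 * (-2) * s - Real.log 2 * (1 - 2 * x) *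
      ((1 - 2 * x) / (2 * s))) / s ^ 2 + (x⁻¹ - -(1-x)⁻¹) by ring, hT, hxinv]
  field_simp
  ring

lemma one_sub_L_sq_nonneg : (0:ℝ) ≤ 1 - (Real.log 2)^2 := by nlinarith [L_lb, L_ub]

lemma sqrt_one_sub_L_sq_le : Real.sqrt (1 - (Real.log 2)^2) ≤ 7/8 := by
  rw [show (7/8 : ℝ) = Real.sqrt ((7/8)^2) by rw [Real.sqrt_sq]; norm_num]
  exact Real.sqrt_le_sqrt (by nlinarith [L_lb])

lemma xstar_ge : (1/16 : ℝ) ≤ xstar := by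
  have := sqrt_one_sub_L_sq_le
  unfold xstar; linarith

lemma xstar_le : xstar ≤ 1/2 := by
  have := Real.sqrt_nonneg (1 - (Real.log 2)^2)
  unfold xstar; linarith

lemma u_xstar : xstar * (1 - xstar) = (Real.log 2)^2 / 4 := by
  have hs2 : Real.sqrt (1 - (Real.log 2)^2) ^ 2 = 1 - (Real.log 2)^2 :=
    Real.sq_sqrt one_sub_L_sq_nonneg
  unfold xstar
  nlinarith [hs2]

lemma sqrt_u_le {x : ℝ} (h0 : 0 < x) (hx : x ≤ xstar) :
    2 * Real.sqrt (x * (1 - x)) ≤ Real.log 2 := by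
  have hxs := xstar_le
  have hu : x * (1 - x) ≤ (Real.log 2)^2 / 4 := by
    rw [← u_xstar]; nlinarith
  have h := Real.sqrt_le_sqrt hu
  rw [show (Real.log 2)^2/4 = (Real.log 2 / 2)^2 by ring,
    Real.sqrt_sq (by nlinarith [L_lb] : (0:ℝ) ≤ Real.log 2 / 2)] at h
  linarith

lemma sqrt_u_ge {x : ℝ} (hx : xstar ≤ x) (hx2 : x ≤ 1/2) :
    Real.log 2 ≤ 2 * Real.sqrt (x * (1 - x)) := by
  have hxs := xstar_ge
  have hu : (Real.log 2)^2 / 4 ≤ x * (1 - x) := by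
    rw [← u_xstar]; nlinarith
  have h := Real.sqrt_le_sqrt hu
  rw [show (Real.log 2)^2/4 = (Real.log 2 / 2)^2 by ring,
    Real.sqrt_sq (by nlinarith [L_lb] : (0:ℝ) ≤ Real.log 2 / 2)] at h
  linarith

lemma F'_antitoneOn : AntitoneOn F' (Icc (1/16 : ℝ) xstar) := by
  have hxs := xstar_le
  refine antitoneOn_of_deriv_nonpos (convex_Icc _ _) ?_ ?_ ?_
  · intro x hx
    have h0 : (0:ℝ) < x := lt_of_lt_of_le (by norm_num) hx.1
    have h1 : x < 1 := by have := hx.2; linarith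
    exact (hasDerivAt_F' h0 h1).continuousAt.continuousWithinAt
  · intro x hx
    rw [interior_Icc] at hx
    have h0 : (0:ℝ) < x := lt_of_lt_of_le (by norm_num) hx.1.le
    have h1 : x < 1 := by have := hx.2; linarith
    exact (hasDerivAt_F' h0 h1).differentiableAt.differentiableWithinAt
  · intro x hx
    rw [interior_Icc] at hx
    have h0 : (0:ℝ) < x := lt_of_lt_of_le (by norm_num) hx.1.le
    have h1 : x < 1 := by have := hx.2; linarith
    rw [(hasDerivAt_F' h0 h1).deriv]
    apply div_nonpos_of_nonpos_of_nonneg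
    · have := sqrt_u_le h0 hx.2.le; linarith
    · positivity

lemma F'_monotoneOn : MonotoneOn F' (Icc xstar (1/2 : ℝ)) := by
  have hxs := xstar_ge
  refine monotoneOn_of_deriv_nonneg (convex_Icc _ _) ?_ ?_ ?_
  · intro x hx
    have h0 : (0:ℝ) < x := lt_of_lt_of_le (by norm_num) (le_trans hxs hx.1)
    have h1 : x < 1 := by have := hx.2; linarith
    exact (hasDerivAt_F' h0 h1).continuousAt.continuousWithinAt
  · intro x hx
    rw [interior_Icc] at hx
    have h0 : (0:ℝ) < x := lt_of_lt_of_le (by norm_num) (le_trans hxs hx.1.le)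
    have h1 : x < 1 := by have := hx.2; linarith
    exact (hasDerivAt_F' h0 h1).differentiableAt.differentiableWithinAt
  · intro x hx
    rw [interior_Icc] at hx
    have h0 : (0:ℝ) < x := lt_of_lt_of_le (by norm_num) (le_trans hxs hx.1.le)
    have h1 : x < 1 := by have := hx.2; linarith
    rw [(hasDerivAt_F' h0 h1).deriv]
    apply div_nonneg
    · have := sqrt_u_ge hx.1.le hx.2.le; linarith
    · positivity

lemma F'_half : F' (1/2 : ℝ) = 0 := by
  unfold F'
  norm_num

lemma sqrt15_lb : (3.87 : ℝ) ≤ Real.sqrt 15 := by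
  rw [show (3.87 : ℝ) = Real.sqrt (3.87^2) by rw [Real.sqrt_sq]; norm_num]
  exact Real.sqrt_le_sqrt (by norm_num)

lemma log15_lb : (2.705 : ℝ) ≤ Real.log 15 := by
  have h16 : Real.log 16 = 4 * Real.log 2 := by
    rw [show (16:ℝ) = 2^4 by norm_num, Real.log_pow]; push_cast; ring
  have hdiv : Real.log (16/15 : ℝ) ≤ 16/15 - 1 :=
    Real.log_le_sub_one_of_pos (by norm_num)
  have h : Real.log (16/15 : ℝ) = Real.log 16 - Real.log 15 :=
    Real.log_div (by norm_num) (by norm_num)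
  have := L_lb
  nlinarith

lemma F'_a_nonpos : F' (1/16 : ℝ) ≤ 0 := by
  unfold F'
  have hs : Real.sqrt ((1/16 : ℝ) * (1 - 1/16)) = Real.sqrt 15 / 16 := by
    rw [show (1/16 : ℝ) * (1 - 1/16) = 15 / 16^2 by norm_num, Real.sqrt_div' 15 (by norm_num),
      Real.sqrt_sq (by norm_num : (0:ℝ) ≤ 16)]
  rw [hs]
  have hlog : Real.log (1/16 : ℝ) - Real.log (1 - 1/16 : ℝ) = - Real.log 15 := by
    rw [show (1 - 1/16 : ℝ) = 15/16 by norm_num, show (1/16:ℝ) = (16:ℝ)⁻¹ by norm_num,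
      Real.log_inv, Real.log_div (by norm_num) (by norm_num)]
    ring
  have key : Real.log 2 * (1 - 2 * (1/16)) / (Real.sqrt 15 / 16) ≤ Real.log 15 := by
    rw [div_le_iff₀ (by positivity)]
    nlinarith [sqrt15_lb, log15_lb, L_ub, Real.sqrt_nonneg 15]
  linarith

lemma F'_nonpos {x : ℝ} (hx : x ∈ Icc (1/16 : ℝ) (1/2)) : F' x ≤ 0 := by
  rcases le_total x xstar with h | h
  · have h1 : (1/16 : ℝ) ∈ Icc (1/16 : ℝ) xstar := ⟨le_refl _, xstar_ge⟩
    have h2 : x ∈ Icc (1/16 : ℝ) xstar := ⟨hx.1, h⟩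
    exact le_trans (F'_antitoneOn h1 h2 hx.1) F'_a_nonpos
  · have h1 : x ∈ Icc xstar (1/2 : ℝ) := ⟨h, hx.2⟩
    have h2 : (1/2 : ℝ) ∈ Icc xstar (1/2 : ℝ) := ⟨xstar_le, le_refl _⟩
    exact le_trans (F'_monotoneOn h1 h2 hx.2) (le_of_eq F'_half)

lemma F_continuous : Continuous F := by
  unfold F
  exact (continuous_const.mul
    (Real.continuous_sqrt.comp (continuous_id.mul (continuous_const.sub continuous_id)))).sub
    Real.binEntropy_continuous

lemma F_antitoneOn : AntitoneOn F (Icc (1/16 : ℝ) (1/2)) := by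
  refine antitoneOn_of_deriv_nonpos (convex_Icc _ _) F_continuous.continuousOn ?_ ?_
  · intro x hx
    rw [interior_Icc] at hx
    have h0 : (0:ℝ) < x := lt_trans (by norm_num) hx.1
    have h1 : x < 1 := by have := hx.2; linarith
    exact (hasDerivAt_F h0 h1).differentiableAt.differentiableWithinAt
  · intro x hx
    rw [interior_Icc] at hx
    have h0 : (0:ℝ) < x := lt_trans (by norm_num) hx.1
    have h1 : x < 1 := by have := hx.2; linarith
    rw [(hasDerivAt_F h0 h1).deriv]
    exact F'_nonpos ⟨hx.1.le, hx.2.le⟩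

lemma F_half : F (1/2 : ℝ) = 0 := by
  unfold F
  rw [show (1/2:ℝ) * (1 - 1/2) = (1/2)^2 by norm_num, Real.sqrt_sq (by norm_num : (0:ℝ) ≤ 1/2),
    show (1/2 : ℝ) = 2⁻¹ by norm_num, Real.binEntropy_two_inv]
  ring

lemma F_nonneg_right {x : ℝ} (hx : x ∈ Icc (1/16 : ℝ) (1/2)) : 0 ≤ F x := by
  have h2 : (1/2 : ℝ) ∈ Icc (1/16 : ℝ) (1/2) := ⟨by norm_num, le_refl _⟩
  have := F_antitoneOn hx h2 hx.2
  rw [F_half] at this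
  exact this

lemma F_concaveOn : ConcaveOn ℝ (Icc (0:ℝ) (1/16)) F := by
  have hev : ∀ x : ℝ, 0 < x → x < 1 → deriv F =ᶠ[nhds x] F' := by
    intro x h0 h1
    exact Filter.eventually_of_mem (isOpen_Ioo.mem_nhds ⟨h0, h1⟩)
      (fun y hy => (hasDerivAt_F hy.1 hy.2).deriv)
  refine concaveOn_of_deriv2_nonpos (convex_Icc _ _) F_continuous.continuousOn ?_ ?_ ?_
  · intro x hx
    rw [interior_Icc] at hx
    have h1 : x < 1 := by have := hx.2; linarith
    exact (hasDerivAt_F hx.1 h1).differentiableAt.differentiableWithinAt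
  · intro x hx
    rw [interior_Icc] at hx
    have h1 : x < 1 := by have := hx.2; linarith
    exact (((hev x hx.1 h1).differentiableAt_iff).mpr
      (hasDerivAt_F' hx.1 h1).differentiableAt).differentiableWithinAt
  · intro x hx
    rw [interior_Icc] at hx
    have h1 : x < 1 := by have := hx.2; linarith
    have hit : deriv^[2] F x = deriv (deriv F) x := rfl
    rw [hit, (hev x hx.1 h1).deriv_eq, (hasDerivAt_F' hx.1 h1).deriv]
    apply div_nonpos_of_nonpos_of_nonneg
    · have := sqrt_u_le hx.1 (le_trans hx.2.le xstar_ge); linarith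
    · positivity

lemma F_zero : F 0 = 0 := by
  unfold F
  simp [Real.binEntropy_zero]

lemma F_nonneg {x : ℝ} (hx : x ∈ Icc (0:ℝ) (1/2)) : 0 ≤ F x := by
  rcases le_total (1/16 : ℝ) x with h | h
  · exact F_nonneg_right ⟨h, hx.2⟩
  · have h0 : (0:ℝ) ∈ Icc (0:ℝ) (1/16) := ⟨le_refl _, by norm_num⟩
    have h16 : (1/16:ℝ) ∈ Icc (0:ℝ) (1/16) := ⟨by norm_num, le_refl _⟩
    have ha : (0:ℝ) ≤ 1 - 16 * x := by linarith
    have hb : (0:ℝ) ≤ 16 * x := by linarith [hx.1]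
    have hsum : (1 - 16 * x) + 16 * x = 1 := by ring
    have := F_concaveOn.2 h0 h16 ha hb hsum
    have hxeq : (1 - 16 * x) • (0:ℝ) + (16 * x) • (1/16 : ℝ) = x := by
      simp only [smul_eq_mul]; ring
    rw [hxeq, F_zero] at this
    have hF16 : 0 ≤ F (1/16 : ℝ) := F_nonneg_right ⟨le_refl _, by norm_num⟩
    have : (16 * x) • F (1/16 : ℝ) ≤ F x := by simpa using this
    simp only [smul_eq_mul] at this
    nlinarith

end BhatAux

theorem binEntropy_le_bhattacharyya (x : ℝ) (hx : x ∈ Set.Icc (0:ℝ) (1/2)) :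
    binEntropy x ≤ 2 * Real.sqrt (x * (1 - x)) := by
  have hL : (0:ℝ) < Real.log 2 := Real.log_pos one_lt_two
  have hbe : binEntropy x = Real.binEntropy x / Real.log 2 := by
    unfold binEntropy Real.binEntropy Real.logb
    rw [Real.log_inv, Real.log_inv]
    field_simp
    ring
  rw [hbe, div_le_iff₀ hL]
  have := BhatAux.F_nonneg hx
  unfold BhatAux.F at this
  linarith
end
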